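/- arXiv:1110.4539 — 2 statements merged into one kernel-verified Lean document; each statement's English description precedes it below -/
import Mathlib

section
/- A directed acyclic graph is Markov equivalent to some undirected graph if and only if it contains no unshielded collision V-configuration (v-structure). -/
/-- A loopless mixed graph with three kinds of edges: lines (undirected),
arrows (directed, `arrow i j` means `i → j`), and arcs (bidirected). -/
structure MixedGraph (V : Type*) where
  line : V → V → Prop
  arrow : V → V → Prop
  arc : V → V → Prop
  line_symm : ∀ i j, line i j → line j i
  arc_symm : ∀ i j, arc i j → arc j i
  line_irrefl : ∀ i, ¬ line i i
  arrow_irrefl : ∀ i, ¬ arrow i i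
  arc_irrefl : ∀ i, ¬ arc i i

namespace MixedGraph

variable {V : Type*}

/-- `i` and `j` are adjacent (joined by some edge). -/
def adj (G : MixedGraph V) (i j : V) : Prop :=
  G.line i j ∨ G.arrow i j ∨ G.arrow j i ∨ G.arc i j

/-- There is an edge between `i` and `j` with an arrowhead pointing at `j`. -/
def headAt (G : MixedGraph V) (i j : V) : Prop :=
  G.arrow i j ∨ G.arc i j

/-- `j` is a collider on the V-configuration `⟨i, j, k⟩`. -/
def collider (G : MixedGraph V) (i j k : V) : Prop :=
  G.headAt i j ∧ G.headAt k j

/-- `i` is an ancestor of `j` (a direction-preserving path of arrows from `i` to `j`). -/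
def anc (G : MixedGraph V) (i j : V) : Prop :=
  Relation.ReflTransGen G.arrow i j

/-- A path: a list of pairwise distinct nodes, consecutive ones adjacent. -/
def isPath (G : MixedGraph V) (p : List V) : Prop :=
  p.Nodup ∧ List.Chain' G.adj p

/-- Inner-node condition for an `m`-connecting path given `C`:
every collider inner node is in `C` or an ancestor of a node of `C`,
every non-collider inner node is outside `C`. -/
def innerOK (G : MixedGraph V) (C : Set V) : List V → Prop
  | a :: b :: c :: rest =>
      ((G.collider a b c → b ∈ C ∨ ∃ x ∈ C, G.anc b x) ∧
        (¬ G.collider a b c → b ∉ C)) ∧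
      innerOK G C (b :: c :: rest)
  | _ => True

/-- `p` is an `m`-connecting path between `i` and `j` given `C`. -/
def mConnecting (G : MixedGraph V) (C : Set V) (i j : V) (p : List V) : Prop :=
  G.isPath p ∧ 2 ≤ p.length ∧ p.head? = some i ∧ p.getLast? = some j ∧
    G.innerOK C p

/-- `A` is `m`-separated from `B` given `C`. -/
def mSep (G : MixedGraph V) (A B C : Set V) : Prop :=
  ¬ ∃ (i j : V) (p : List V), i ∈ A ∧ j ∈ B ∧ G.mConnecting C i j p

/-- Two mixed graphs on the same node set are Markov equivalent if they induce
exactly the same `m`-separation statements among disjoint sets. -/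
def markovEquiv (G₁ G₂ : MixedGraph V) : Prop :=
  ∀ A B C : Set V, Disjoint A B → Disjoint A C → Disjoint B C →
    (G₁.mSep A B C ↔ G₂.mSep A B C)

/-- An undirected graph: only line edges. -/
def isUG (G : MixedGraph V) : Prop :=
  (∀ i j, ¬ G.arrow i j) ∧ (∀ i j, ¬ G.arc i j)

/-- A bidirected graph: only arc edges. -/
def isBG (G : MixedGraph V) : Prop :=
  (∀ i j, ¬ G.arrow i j) ∧ (∀ i j, ¬ G.line i j)

/-- A directed acyclic graph: only arrows, and no directed cycle. -/
def isDAG (G : MixedGraph V) : Prop :=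
  (∀ i j, ¬ G.line i j) ∧ (∀ i j, ¬ G.arc i j) ∧ ∀ i, ¬ Relation.TransGen G.arrow i i

/-- An ancestral graph: no node is an ancestor of one of its parents or spouses,
and no arrowhead points at a node having a neighbour. -/
def isAncestral (G : MixedGraph V) : Prop :=
  (∀ i j, (G.arrow j i ∨ G.arc j i) → ¬ G.anc i j) ∧
  (∀ i j k, G.line i j → ¬ G.headAt k i)

/-- Maximality: every pair of distinct non-adjacent nodes can be `m`-separated. -/
def isMaximal (G : MixedGraph V) : Prop :=
  ∀ i j, i ≠ j → ¬ G.adj i j → ∃ C : Set V, i ∉ C ∧ j ∉ C ∧ G.mSep {i} {j} C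

/-- A maximal ancestral graph. -/
def isMAG (G : MixedGraph V) : Prop :=
  G.isAncestral ∧ G.isMaximal

/-- Two graphs have the same skeleton. -/
def sameSkeleton (G₁ G₂ : MixedGraph V) : Prop :=
  ∀ i j, G₁.adj i j ↔ G₂.adj i j

/-- An unshielded collider V-configuration `⟨i, j, k⟩`. -/
def unshieldedCollider (G : MixedGraph V) (i j k : V) : Prop :=
  G.collider i j k ∧ i ≠ k ∧ ¬ G.adj i k

end MixedGraph

namespace MixedGraph
variable {V : Type*}

/-- An unshielded collision V-configuration `i → j ← k` with `i, k` non-adjacent. -/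
def unshieldedCollision (G : MixedGraph V) (i j k : V) : Prop :=
  G.arrow i j ∧ G.arrow k j ∧ i ≠ k ∧ ¬ G.adj i k

end MixedGraph


section Aux

variable {V : Type*}

/-- Condition on all consecutive triples of a list. -/
def TriOK (Q : V → V → V → Prop) : List V → Prop
  | a :: b :: c :: rest => Q a b c ∧ TriOK Q (b :: c :: rest)
  | _ => True

lemma TriOK.tail {Q : V → V → V → Prop} {x : V} {l : List V}
    (h : TriOK Q (x :: l)) : TriOK Q l := by
  match l with
  | [] => trivial
  | [b] => trivial
  | b :: c :: r => exact h.2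

lemma triOK_imp₂ {Q₁ Q₂ Q₃ : V → V → V → Prop}
    (h : ∀ a b c, Q₁ a b c → Q₂ a b c → Q₃ a b c) :
    ∀ {p : List V}, TriOK Q₁ p → TriOK Q₂ p → TriOK Q₃ p
  | [], _, _ => trivial
  | [_], _, _ => trivial
  | [_, _], _, _ => trivial
  | a :: b :: c :: _, h₁, h₂ =>
      ⟨h a b c h₁.1 h₂.1, triOK_imp₂ h h₁.2 h₂.2⟩

lemma triOK_mono {Q₁ Q₂ : V → V → V → Prop} (h : ∀ a b c, Q₁ a b c → Q₂ a b c)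
    {p : List V} (hp : TriOK Q₁ p) : TriOK Q₂ p :=
  triOK_imp₂ (fun a b c h₁ _ => h a b c h₁) hp hp

lemma triOK_congr {Q₁ Q₂ : V → V → V → Prop} (h : ∀ a b c, Q₁ a b c ↔ Q₂ a b c)
    {p : List V} : TriOK Q₁ p ↔ TriOK Q₂ p :=
  ⟨triOK_mono (fun a b c => (h a b c).mp), triOK_mono (fun a b c => (h a b c).mpr)⟩

lemma triOK_decomp (Q : V → V → V → Prop) :
    ∀ p : List V, TriOK Q p ∨ ∃ u a b c v, p = u ++ a :: b :: c :: v ∧ ¬ Q a b c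
  | [] => Or.inl trivial
  | [_] => Or.inl trivial
  | [_, _] => Or.inl trivial
  | x :: b :: c :: r => by
      by_cases hq : Q x b c
      · rcases triOK_decomp Q (b :: c :: r) with h | ⟨u, a', b', c', v, he, hn⟩
        · exact Or.inl ⟨hq, h⟩
        · exact Or.inr ⟨x :: u, a', b', c', v, by rw [List.cons_append, ← he], hn⟩
      · exact Or.inr ⟨[], x, b, c, r, rfl, hq⟩

lemma triOK_elim {Q : V → V → V → Prop} {a b c : V} {v : List V} :
    ∀ u : List V, TriOK Q (u ++ a :: b :: c :: v) → Q a b c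
  | [], h => h.1
  | _ :: u', h => triOK_elim u' (TriOK.tail (l := u' ++ a :: b :: c :: v) h)

lemma triOK_shortcut {Q : V → V → V → Prop} {a b c : V} {v : List V}
    (h1 : ∀ x, Q x a b → Q x a c) (h2 : ∀ d, Q b c d → Q a c d) :
    ∀ u : List V, TriOK Q (u ++ a :: b :: c :: v) → TriOK Q (u ++ a :: c :: v)
  | [], h => by
      cases v with
      | nil => trivial
      | cons d v' => exact ⟨h2 d h.2.1, h.2.2⟩
  | [x], h => ⟨h1 x h.1, triOK_shortcut h1 h2 [] h.2⟩
  | [x, y], h => ⟨h.1, triOK_shortcut h1 h2 [y] h.2⟩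
  | x :: y :: z :: u', h => ⟨h.1, triOK_shortcut h1 h2 (y :: z :: u') h.2⟩

lemma head?_shortcut {a b c : V} {v : List V} :
    ∀ u : List V, (u ++ a :: c :: v).head? = (u ++ a :: b :: c :: v).head?
  | [] => rfl
  | _ :: _ => rfl

lemma getLast?_cons_ne_nil {x : V} {M : List V} (h : M ≠ []) :
    (x :: M).getLast? = M.getLast? := by
  cases M with
  | nil => exact absurd rfl h
  | cons y t => exact List.getLast?_cons_cons

lemma getLast?_shortcut {a b c : V} {v : List V} :
    ∀ u : List V, (u ++ a :: c :: v).getLast? = (u ++ a :: b :: c :: v).getLast?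
  | [] => by
      show (a :: c :: v).getLast? = (a :: b :: c :: v).getLast?
      rw [List.getLast?_cons_cons, List.getLast?_cons_cons, List.getLast?_cons_cons]
  | x :: u' => by
      show (x :: (u' ++ a :: c :: v)).getLast? = (x :: (u' ++ a :: b :: c :: v)).getLast?
      rw [getLast?_cons_ne_nil (by simp), getLast?_cons_ne_nil (by simp)]
      exact getLast?_shortcut u'

lemma chain'_shortcut {R : V → V → Prop} {a b c : V} {v : List V} (hac : R a c) :
    ∀ u : List V, List.Chain' R (u ++ a :: b :: c :: v) → List.Chain' R (u ++ a :: c :: v)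
  | [], h => by
      show List.Chain' R (a :: c :: v)
      simp only [List.Chain', List.nil_append, List.isChain_cons_cons] at h
      exact List.isChain_cons_cons.mpr ⟨hac, h.2.2⟩
  | x :: u', h => by
      show List.Chain' R (x :: (u' ++ a :: c :: v))
      simp only [List.Chain', List.cons_append, List.isChain_cons] at h
      refine List.isChain_cons.mpr ⟨?_, chain'_shortcut hac u' h.2⟩
      intro y hy
      apply h.1
      rw [head?_shortcut (b := b) u'] at hy
      exact hy

lemma sublist_shortcut {a b c : V} {v : List V} (u : List V) :
    (u ++ a :: c :: v).Sublist (u ++ a :: b :: c :: v) :=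
  List.Sublist.append_left
    (List.Sublist.cons₂ a (List.Sublist.cons b (List.Sublist.refl (c :: v)))) u

end Aux

namespace MixedGraph

variable {V : Type*} {G : MixedGraph V}

lemma adj_symm {i j : V} (h : G.adj i j) : G.adj j i := by
  rcases h with h | h | h | h
  · exact Or.inl (G.line_symm _ _ h)
  · exact Or.inr (Or.inr (Or.inl h))
  · exact Or.inr (Or.inl h)
  · exact Or.inr (Or.inr (Or.inr (G.arc_symm _ _ h)))

lemma isDAG.no_line (hG : G.isDAG) : ∀ i j, ¬ G.line i j := hG.1
lemma isDAG.no_arc (hG : G.isDAG) : ∀ i j, ¬ G.arc i j := hG.2.1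
lemma isDAG.acyc (hG : G.isDAG) : ∀ i, ¬ Relation.TransGen G.arrow i i := hG.2.2

lemma isDAG.not_arrow_rev (hG : G.isDAG) {i j : V} (h : G.arrow i j) : ¬ G.arrow j i :=
  fun h' => hG.acyc i (Relation.TransGen.head h (Relation.TransGen.single h'))

lemma isDAG.adj_iff (hG : G.isDAG) {i j : V} :
    G.adj i j ↔ G.arrow i j ∨ G.arrow j i := by
  constructor
  · rintro (h | h | h | h)
    · exact absurd h (hG.no_line i j)
    · exact Or.inl h
    · exact Or.inr h
    · exact absurd h (hG.no_arc i j)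
  · rintro (h | h)
    · exact Or.inr (Or.inl h)
    · exact Or.inr (Or.inr (Or.inl h))

lemma isDAG.headAt_iff (hG : G.isDAG) {i j : V} : G.headAt i j ↔ G.arrow i j := by
  constructor
  · rintro (h | h)
    · exact h
    · exact absurd h (hG.no_arc i j)
  · exact Or.inl

lemma isDAG.collider_iff (hG : G.isDAG) {a b c : V} :
    G.collider a b c ↔ G.arrow a b ∧ G.arrow c b := by
  unfold collider
  rw [hG.headAt_iff, hG.headAt_iff]

lemma isDAG.adj_irrefl (hG : G.isDAG) (i : V) : ¬ G.adj i i := by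
  rw [hG.adj_iff]
  rintro (h | h) <;> exact G.arrow_irrefl i h

lemma isDAG.both_anc (hG : G.isDAG) {i j : V} (h1 : G.anc i j) (h2 : G.anc j i) :
    i = j := by
  by_contra hne
  rcases Relation.reflTransGen_iff_eq_or_transGen.mp h1 with he | ht
  · exact hne he.symm
  · exact hG.acyc i (Relation.TransGen.trans_left ht h2)

/-- The triple condition in `innerOK`. -/
def innerQ (G : MixedGraph V) (C : Set V) (a b c : V) : Prop :=
  (G.collider a b c → b ∈ C ∨ ∃ x ∈ C, G.anc b x) ∧ (¬ G.collider a b c → b ∉ C)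

lemma innerOK_iff_triOK (G : MixedGraph V) (C : Set V) :
    ∀ p : List V, G.innerOK C p ↔ TriOK (G.innerQ C) p
  | [] => Iff.rfl
  | [_] => Iff.rfl
  | [_, _] => Iff.rfl
  | a :: b :: c :: r => by
      show (G.innerQ C a b c ∧ G.innerOK C (b :: c :: r)) ↔
        (G.innerQ C a b c ∧ TriOK (G.innerQ C) (b :: c :: r))
      rw [innerOK_iff_triOK G C (b :: c :: r)]

end MixedGraph

namespace MixedGraph

variable {V : Type*} {G : MixedGraph V}

/-- Main surgery lemma: from any suitable path we can extract one without colliders,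
preserving a triple-condition `Q` that is stable under collider shortcuts. -/
lemma isDAG.exists_noColl (hG : G.isDAG) (Q : V → V → V → Prop)
    (hsh : ∀ a b c, G.arrow a b → G.arrow c b → G.adj a c → Q a b c →
      (∀ x, Q x a b → Q x a c) ∧ (∀ d, Q b c d → Q a c d))
    (hnc : ∀ a b c, G.arrow a b → G.arrow c b → a ≠ c → G.adj a c) :
    ∀ (n : ℕ) (p : List V) (i j : V), p.length ≤ n → p.Nodup → List.Chain' G.adj p →
      p.head? = some i → p.getLast? = some j → 2 ≤ p.length → TriOK Q p →
      ∃ q : List V, q.Nodup ∧ List.Chain' G.adj q ∧ q.head? = some i ∧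
        q.getLast? = some j ∧ 2 ≤ q.length ∧ TriOK Q q ∧
        TriOK (fun a b c => ¬ G.collider a b c) q := by
  intro n
  induction n with
  | zero =>
      intro p i j hlen _ _ _ _ h2 _
      omega
  | succ n ih =>
      intro p i j hlen hnd hch hhd hla h2 hQ
      rcases triOK_decomp (fun a b c => ¬ G.collider a b c) p with
        hok | ⟨u, a, b, c, v, rfl, hcol⟩
      · exact ⟨p, hnd, hch, hhd, hla, h2, hQ, hok⟩
      · rw [not_not] at hcol
        obtain ⟨hab, hcb⟩ := hG.collider_iff.mp hcol
        have hnd' : (a :: b :: c :: v).Nodup := by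
          have hsub : (a :: b :: c :: v).Sublist (u ++ a :: b :: c :: v) :=
            List.sublist_append_right u _
          exact hsub.nodup hnd
        have hane : a ≠ c := by
          have := (List.nodup_cons.mp hnd').1
          simp only [List.mem_cons] at this
          tauto
        have hac : G.adj a c := hnc a b c hab hcb hane
        obtain ⟨h1, h2'⟩ := hsh a b c hab hcb hac (triOK_elim u hQ)
        refine ih (u ++ a :: c :: v) i j ?_ ?_ ?_ ?_ ?_ ?_ ?_
        · simp only [List.length_append, List.length_cons] at hlen ⊢
          omega
        · exact (sublist_shortcut u).nodup hnd
        · exact chain'_shortcut hac u hch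
        · exact (head?_shortcut u).trans hhd
        · exact (getLast?_shortcut u).trans hla
        · simp only [List.length_append, List.length_cons]
          omega
        · exact triOK_shortcut h1 h2' u hQ

lemma isDAG.hsh_innerQ (hG : G.isDAG) (C : Set V) :
    ∀ a b c, G.arrow a b → G.arrow c b → G.adj a c → G.innerQ C a b c →
      (∀ x, G.innerQ C x a b → G.innerQ C x a c) ∧
      (∀ d, G.innerQ C b c d → G.innerQ C a c d) := by
  intro a b c hab hcb _ hQabc
  have hb : b ∈ C ∨ ∃ x ∈ C, G.anc b x := hQabc.1 (hG.collider_iff.mpr ⟨hab, hcb⟩)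
  have hanc : ∀ y, G.arrow y b → ∃ x ∈ C, G.anc y x := by
    intro y hyb
    rcases hb with h | ⟨x, hx, hbx⟩
    · exact ⟨b, h, Relation.ReflTransGen.single hyb⟩
    · exact ⟨x, hx, Relation.ReflTransGen.head hyb hbx⟩
  constructor
  · intro x hx
    constructor
    · intro _
      exact Or.inr (hanc a hab)
    · intro _
      have hncol : ¬ G.collider x a b := by
        rw [hG.collider_iff]
        rintro ⟨_, h⟩
        exact hG.not_arrow_rev hab h
      exact hx.2 hncol
  · intro d hd
    constructor
    · intro _
      exact Or.inr (hanc c hcb)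
    · intro _
      have hncol : ¬ G.collider b c d := by
        rw [hG.collider_iff]
        rintro ⟨h, _⟩
        exact hG.not_arrow_rev hcb h
      exact hd.2 hncol

/-- Equivalence of `m`-connection in a nice DAG with plain connection avoiding `C`. -/
lemma isDAG.conn_iff (hG : G.isDAG)
    (hnc : ∀ a b c, G.arrow a b → G.arrow c b → a ≠ c → G.adj a c)
    (C : Set V) (i j : V) :
    (∃ p, G.mConnecting C i j p) ↔
      ∃ p : List V, p.Nodup ∧ List.Chain' G.adj p ∧ p.head? = some i ∧
        p.getLast? = some j ∧ 2 ≤ p.length ∧ TriOK (fun _ b _ => b ∉ C) p := by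
  constructor
  · rintro ⟨p, ⟨hnd, hch⟩, h2, hhd, hla, hio⟩
    rw [innerOK_iff_triOK] at hio
    obtain ⟨q, hnd', hch', hhd', hla', h2', hQ', hnc'⟩ :=
      hG.exists_noColl (G.innerQ C) (hG.hsh_innerQ C) hnc p.length p i j le_rfl
        hnd hch hhd hla h2 hio
    exact ⟨q, hnd', hch', hhd', hla', h2',
      triOK_imp₂ (fun a b c hq hn => hq.2 hn) hQ' hnc'⟩
  · rintro ⟨p, hnd, hch, hhd, hla, h2, hio⟩
    obtain ⟨q, hnd', hch', hhd', hla', h2', hQ', hnc'⟩ :=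
      hG.exists_noColl (fun _ b _ => b ∉ C)
        (fun a b c _ _ _ _ => ⟨fun _ h => h, fun _ h => h⟩) hnc
        p.length p i j le_rfl hnd hch hhd hla h2 hio
    refine ⟨q, ⟨hnd', hch'⟩, h2', hhd', hla', ?_⟩
    rw [innerOK_iff_triOK]
    exact triOK_imp₂ (fun a b c hb hn => ⟨fun hc => absurd hc hn, fun _ => hb⟩) hQ' hnc'

/-- The skeleton of a DAG, as an undirected graph. -/
def skel (G : MixedGraph V) (hG : G.isDAG) : MixedGraph V where
  line x y := G.adj x y ∨ G.adj y x
  arrow _ _ := False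
  arc _ _ := False
  line_symm := fun _ _ h => Or.symm h
  arc_symm := fun _ _ h => h.elim
  line_irrefl := fun i h => hG.adj_irrefl i (h.elim id id)
  arrow_irrefl := fun _ h => h
  arc_irrefl := fun _ h => h

lemma skel_isUG (hG : G.isDAG) : (G.skel hG).isUG :=
  ⟨fun _ _ h => h, fun _ _ h => h⟩

lemma skel_adj (hG : G.isDAG) {x y : V} : (G.skel hG).adj x y ↔ G.adj x y := by
  show ((G.adj x y ∨ G.adj y x) ∨ False ∨ False ∨ False) ↔ G.adj x y
  simp only [or_false]
  exact ⟨fun h => h.elim id adj_symm, Or.inl⟩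

lemma isUG.no_collider {U : MixedGraph V} (hU : U.isUG) (a b c : V) :
    ¬ U.collider a b c := by
  rintro ⟨h, -⟩
  rcases h with h | h
  · exact hU.1 a b h
  · exact hU.2 a b h

lemma isUG.mConnecting_iff {U : MixedGraph V} (hU : U.isUG)
    (C : Set V) (i j : V) (p : List V) :
    U.mConnecting C i j p ↔
      p.Nodup ∧ List.Chain' U.adj p ∧ p.head? = some i ∧
        p.getLast? = some j ∧ 2 ≤ p.length ∧ TriOK (fun _ b _ => b ∉ C) p := by
  unfold mConnecting isPath
  rw [innerOK_iff_triOK]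
  have : TriOK (U.innerQ C) p ↔ TriOK (fun _ b _ => (b : V) ∉ C) p := by
    apply triOK_congr
    intro a b c
    constructor
    · intro h
      exact h.2 (hU.no_collider a b c)
    · intro h
      exact ⟨fun hc => absurd hc (hU.no_collider a b c), fun _ => h⟩
  rw [this]
  tauto

end MixedGraph

namespace MixedGraph

variable {V : Type*} {G : MixedGraph V}

lemma mem_of_getLast?' : ∀ {l : List V} {a : V}, l.getLast? = some a → a ∈ l
  | [x], a, h => by
      simp only [List.getLast?_singleton, Option.some.injEq] at h
      simp [h]
  | x :: y :: t, a, h => by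
      rw [List.getLast?_cons_cons] at h
      exact List.mem_cons_of_mem x (mem_of_getLast?' h)

/-- Walking down a directed edge on an m-connecting path given the parents of `k`
leads to a contradiction. -/
lemma isDAG.walk (hG : G.isDAG) {i k : V} (hanc : ¬ G.anc k i) :
    ∀ (t : List V) (a b : V), G.arrow a b → G.anc k b →
      TriOK (G.innerQ {v | G.arrow v k}) (a :: b :: t) →
      List.Chain' G.adj (a :: b :: t) → (a :: b :: t).getLast? = some i → False
  | [], _, b, _, hkb, _, _, hla => by
      have hbi : b = i := by simpa using hla
      exact hanc (hbi ▸ hkb)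
  | c :: t', a, b, hab, hkb, hio, hch, hla => by
      have hch' : List.Chain' G.adj (b :: c :: t') := (List.isChain_cons_cons.mp hch).2
      have hbc : G.adj b c := (List.isChain_cons_cons.mp hch').1
      rcases hG.adj_iff.mp hbc with h | h
      · exact hG.walk hanc t' b c h (hkb.tail h) hio.2 hch'
          (by rw [List.getLast?_cons_cons] at hla; exact hla)
      · have hcol : G.collider a b c := hG.collider_iff.mpr ⟨hab, h⟩
        rcases hio.1.1 hcol with hbC | ⟨x, hx, hbx⟩
        · exact hG.acyc k (Relation.TransGen.tail' hkb hbC)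
        · exact hG.acyc k (Relation.TransGen.tail' (hkb.trans hbx) hx)

/-- In a DAG, two non-adjacent nodes (the second not an ancestor of the first) are
m-separated by the parents of the second. -/
lemma isDAG.pa_sep (hG : G.isDAG) {i k : V} (hna : ¬ G.adj i k) (hanc : ¬ G.anc k i) :
    G.mSep {k} {i} {v | G.arrow v k} := by
  rintro ⟨k', i', p, hk', hi', ⟨hnd, hch⟩, h2, hhd, hla, hio⟩
  simp only [Set.mem_singleton_iff] at hk' hi'
  subst hk'
  subst hi'
  obtain ⟨x, rest, rfl⟩ : ∃ x rest, p = x :: rest := by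
    cases p with
    | nil => simp at hhd
    | cons x rest => exact ⟨x, rest, rfl⟩
  have hx : x = k' := by simpa using hhd
  subst hx
  cases rest with
  | nil => simp at h2
  | cons y t =>
    have hky : G.adj x y := (List.isChain_cons_cons.mp hch).1
    rw [innerOK_iff_triOK] at hio
    have hla' : (x :: y :: t).getLast? = some i' := hla
    rcases hG.adj_iff.mp hky with hxy | hyx
    · exact hG.walk hanc t x y hxy (Relation.ReflTransGen.single hxy) hio hch hla'
    · cases t with
      | nil =>
        have hyi : y = i' := by simpa using hla'
        subst hyi
        exact hna (Or.inr (Or.inl hyx))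
      | cons z t' =>
        have hncol : ¬ G.collider x y z := by
          rw [hG.collider_iff]
          rintro ⟨h, -⟩
          exact hG.not_arrow_rev hyx h
        exact hio.1.2 hncol hyx

/-- Two adjacent nodes cannot be separated by anything. -/
lemma adj.not_mSep {U : MixedGraph V} {a b : V} (hab : U.adj a b) (hne : a ≠ b)
    (C : Set V) : ¬ U.mSep {a} {b} C := by
  intro h
  refine h ⟨a, b, [a, b], rfl, rfl, ⟨⟨?_, ?_⟩, ?_, rfl, rfl, trivial⟩⟩
  · simp [hne]
  · simp [List.Chain', hab]
  · simp

lemma markovEquiv.sameSkeleton {U : MixedGraph V} (hG : G.isDAG) (hU : U.isUG)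
    (heq : G.markovEquiv U) : G.sameSkeleton U := by
  intro i j
  constructor
  · intro h
    have hne : i ≠ j := fun he => hG.adj_irrefl i (he ▸ h)
    by_contra hnadj
    have hsepU : U.mSep {i} {j} ({i, j}ᶜ) := by
      rintro ⟨i', j', p, hi', hj', hconn⟩
      simp only [Set.mem_singleton_iff] at hi' hj'
      subst hi'
      subst hj'
      rw [hU.mConnecting_iff] at hconn
      obtain ⟨hnd, hch, hhd, hla, h2, hio⟩ := hconn
      obtain ⟨x, rest, rfl⟩ : ∃ x rest, p = x :: rest := by
        cases p with
        | nil => simp at hhd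
        | cons x rest => exact ⟨x, rest, rfl⟩
      have hx : x = i' := by simpa using hhd
      subst hx
      cases rest with
      | nil => simp at h2
      | cons y t =>
        cases t with
        | nil =>
          have hyj : y = j' := by simpa using hla
          subst hyj
          exact hnadj ((List.isChain_cons_cons.mp hch).1)
        | cons z t' =>
          have hyC : y ∉ ({x, j'}ᶜ : Set V) := hio.1
          have hy : y = x ∨ y = j' := by
            have : y ∈ ({x, j'} : Set V) := Set.notMem_compl_iff.mp hyC
            simpa [Set.mem_insert_iff] using this
          rcases hy with rfl | rfl
          · exact (List.nodup_cons.mp hnd).1 List.mem_cons_self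
          · have hmem : y ∈ z :: t' := by
              rw [List.getLast?_cons_cons, List.getLast?_cons_cons] at hla
              exact mem_of_getLast?' hla
            exact (List.nodup_cons.mp (List.nodup_cons.mp hnd).2).1 hmem
    have hd1 : Disjoint ({i} : Set V) {j} := by simp [hne]
    have hd2 : Disjoint ({i} : Set V) ({i, j}ᶜ) := by simp [Set.disjoint_left]
    have hd3 : Disjoint ({j} : Set V) ({i, j}ᶜ) := by simp [Set.disjoint_left]
    have hsepG : G.mSep {i} {j} ({i, j}ᶜ) := (heq _ _ _ hd1 hd2 hd3).mpr hsepU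
    exact h.not_mSep hne _ hsepG
  · intro h
    have hne : i ≠ j := by
      rintro rfl
      rcases h with h | h | h | h
      · exact U.line_irrefl i h
      · exact hU.1 i i h
      · exact hU.1 i i h
      · exact hU.2 i i h
    by_contra hnadj
    by_cases hanc : G.anc j i
    · have hanc' : ¬ G.anc i j := by
        intro h'
        exact hne (hG.both_anc h' hanc)
      have hsepG : G.mSep {i} {j} {v | G.arrow v i} :=
        hG.pa_sep (fun h' => hnadj (adj_symm h')) hanc'
      have hd1 : Disjoint ({i} : Set V) ({j} : Set V) := by simp [hne]
      have hd2 : Disjoint ({i} : Set V) {v | G.arrow v i} := by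
        simp [Set.disjoint_left, G.arrow_irrefl i]
      have hd3 : Disjoint ({j} : Set V) {v | G.arrow v i} := by
        simp only [Set.disjoint_left, Set.mem_singleton_iff]
        rintro a rfl hji
        exact hnadj (Or.inr (Or.inr (Or.inl hji)))
      have hsepU := (heq _ _ _ hd1 hd2 hd3).mp hsepG
      exact h.not_mSep hne _ hsepU
    · have hsepG : G.mSep {j} {i} {v | G.arrow v j} := hG.pa_sep hnadj hanc
      have hd1 : Disjoint ({j} : Set V) ({i} : Set V) := by simp [hne.symm]
      have hd2 : Disjoint ({j} : Set V) {v | G.arrow v j} := by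
        simp [Set.disjoint_left, G.arrow_irrefl j]
      have hd3 : Disjoint ({i} : Set V) {v | G.arrow v j} := by
        simp only [Set.disjoint_left, Set.mem_singleton_iff]
        rintro a rfl hij
        exact hnadj (Or.inr (Or.inl hij))
      have hsepU := (heq _ _ _ hd1 hd2 hd3).mp hsepG
      exact (adj_symm h).not_mSep hne.symm _ hsepU

end MixedGraph

/-- A DAG is Markov equivalent to some undirected graph iff it contains no
unshielded collision V-configuration. -/
theorem dag_equiv_some_ug_iff {V : Type*} [Fintype V] (G : MixedGraph V)
    (hG : G.isDAG) :
    (∃ U : MixedGraph V, U.isUG ∧ G.markovEquiv U) ↔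
      ¬ ∃ i j k, G.unshieldedCollision i j k := by
  constructor
  · rintro ⟨U, hU, heq⟩ ⟨i, j, k, hij, hkj, hik, hnadj⟩
    have hskel := heq.sameSkeleton hG hU
    have hUij : U.adj i j := (hskel i j).mp (Or.inr (Or.inl hij))
    have hUjk : U.adj j k := (hskel j k).mp (Or.inr (Or.inr (Or.inl hkj)))
    have hne_ij : i ≠ j := fun h => G.arrow_irrefl j (h ▸ hij)
    have hne_jk : j ≠ k := fun h => G.arrow_irrefl j (h ▸ hkj)
    by_cases hanc : G.anc k i
    · have hanc' : ¬ G.anc i k := fun h' => hik (hG.both_anc h' hanc)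
      have hsepG : G.mSep {i} {k} {v | G.arrow v i} :=
        hG.pa_sep (fun h' => hnadj (MixedGraph.adj_symm h')) hanc'
      have hd1 : Disjoint ({i} : Set V) ({k} : Set V) := by simp [hik]
      have hd2 : Disjoint ({i} : Set V) {v | G.arrow v i} := by
        simp [Set.disjoint_left, G.arrow_irrefl i]
      have hd3 : Disjoint ({k} : Set V) {v | G.arrow v i} := by
        simp only [Set.disjoint_left, Set.mem_singleton_iff]
        rintro a rfl hki
        exact hnadj (Or.inr (Or.inr (Or.inl hki)))
      have hsepU := (heq _ _ _ hd1 hd2 hd3).mp hsepG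
      apply hsepU
      refine ⟨i, k, [i, j, k], rfl, rfl, ⟨⟨?_, ?_⟩, ?_, rfl, rfl, ?_⟩⟩
      · simp [hne_ij, hne_jk, hik]
      · simp [List.Chain', List.isChain_cons_cons, hUij, hUjk]
      · simp
      · exact ⟨⟨fun hc => (hU.no_collider i j k hc).elim,
          fun _ hjC => hG.not_arrow_rev hij hjC⟩, trivial⟩
    · have hsepG : G.mSep {k} {i} {v | G.arrow v k} := hG.pa_sep hnadj hanc
      have hd1 : Disjoint ({k} : Set V) ({i} : Set V) := by
        simp [Ne.symm hik]
      have hd2 : Disjoint ({k} : Set V) {v | G.arrow v k} := by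
        simp [Set.disjoint_left, G.arrow_irrefl k]
      have hd3 : Disjoint ({i} : Set V) {v | G.arrow v k} := by
        simp only [Set.disjoint_left, Set.mem_singleton_iff]
        rintro a rfl hik'
        exact hnadj (Or.inr (Or.inl hik'))
      have hsepU := (heq _ _ _ hd1 hd2 hd3).mp hsepG
      apply hsepU
      refine ⟨k, i, [k, j, i], rfl, rfl, ⟨⟨?_, ?_⟩, ?_, rfl, rfl, ?_⟩⟩
      · simp [Ne.symm hne_jk, Ne.symm hne_ij, Ne.symm hik]
      · simp [List.Chain', List.isChain_cons_cons, MixedGraph.adj_symm hUjk, MixedGraph.adj_symm hUij]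
      · simp
      · exact ⟨⟨fun hc => (hU.no_collider k j i hc).elim,
          fun _ hjC => hG.not_arrow_rev hkj hjC⟩, trivial⟩
  · intro hnoc
    refine ⟨G.skel hG, MixedGraph.skel_isUG hG, ?_⟩
    have hnc : ∀ a b c, G.arrow a b → G.arrow c b → a ≠ c → G.adj a c := by
      intro a b c hab hcb hne
      by_contra h
      exact hnoc ⟨a, b, c, hab, hcb, hne, h⟩
    intro A B C _ _ _
    have hchain : ∀ p : List V, List.Chain' (G.skel hG).adj p ↔ List.Chain' G.adj p :=
      fun p => ⟨List.IsChain.imp (fun a b => (MixedGraph.skel_adj hG).mp),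
        List.IsChain.imp (fun a b => (MixedGraph.skel_adj hG).mpr)⟩
    have key : ∀ i j : V,
        (∃ p, G.mConnecting C i j p) ↔ ∃ p, (G.skel hG).mConnecting C i j p := by
      intro i j
      rw [hG.conn_iff hnc C i j]
      refine exists_congr fun p => ?_
      rw [(MixedGraph.skel_isUG hG).mConnecting_iff, hchain p]
    constructor
    · intro h
      rintro ⟨i, j, p, hi, hj, hc⟩
      obtain ⟨q, hq⟩ := (key i j).mpr ⟨p, hc⟩
      exact h ⟨i, j, q, hi, hj, hq⟩
    · intro h
      rintro ⟨i, j, p, hi, hj, hc⟩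
      obtain ⟨q, hq⟩ := (key i j).mp ⟨p, hc⟩
      exact h ⟨i, j, q, hi, hj, hq⟩
end

section
/- A bidirected graph is Markov equivalent to some directed acyclic graph if and only if it contains no induced P4 (path on 4 vertices) and no induced C4 (chordless 4-cycle). -/
/-- There are four distinct nodes whose induced subgraph is a path `a - b - c - d`. -/
def inducedP4 {V : Type*} (adj : V → V → Prop) : Prop :=
  ∃ a b c d : V, a ≠ b ∧ a ≠ c ∧ a ≠ d ∧ b ≠ c ∧ b ≠ d ∧ c ≠ d ∧
    adj a b ∧ adj b c ∧ adj c d ∧ ¬ adj a c ∧ ¬ adj a d ∧ ¬ adj b d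

/-- There are four distinct nodes whose induced subgraph is a chordless
four-cycle `a - b - c - d - a`. -/
def inducedC4 {V : Type*} (adj : V → V → Prop) : Prop :=
  ∃ a b c d : V, a ≠ b ∧ a ≠ c ∧ a ≠ d ∧ b ≠ c ∧ b ≠ d ∧ c ≠ d ∧
    adj a b ∧ adj b c ∧ adj c d ∧ adj d a ∧ ¬ adj a c ∧ ¬ adj b d

namespace MixedGraph

variable {V : Type*}

/-! ### basic lemmas -/

lemma adj_irrefl (G : MixedGraph V) (i : V) : ¬ G.adj i i := by
  rintro (h | h | h | h)
  exacts [G.line_irrefl i h, G.arrow_irrefl i h, G.arrow_irrefl i h, G.arc_irrefl i h]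

lemma ne_of_adj {G : MixedGraph V} {i j : V} (h : G.adj i j) : i ≠ j := by
  rintro rfl; exact G.adj_irrefl i h

lemma arc_of_adj {G : MixedGraph V} (hG : G.isBG) {i j : V} (h : G.adj i j) : G.arc i j := by
  rcases h with h | h | h | h
  · exact absurd h (hG.2 i j)
  · exact absurd h (hG.1 i j)
  · exact absurd h (hG.1 j i)
  · exact h

lemma adj_symm_bg {G : MixedGraph V} (hG : G.isBG) {i j : V} (h : G.adj i j) : G.adj j i :=
  Or.inr (Or.inr (Or.inr (G.arc_symm _ _ (arc_of_adj hG h))))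

lemma anc_iff_bg {G : MixedGraph V} (hG : G.isBG) {i j : V} : G.anc i j ↔ i = j := by
  constructor
  · intro h
    induction h with
    | refl => rfl
    | tail _ h _ => exact absurd h (hG.1 _ _)
  · rintro rfl; exact Relation.ReflTransGen.refl

lemma collider_bg {G : MixedGraph V} (hG : G.isBG) {i j k : V} (h1 : G.adj i j)
    (h2 : G.adj j k) : G.collider i j k :=
  ⟨Or.inr (arc_of_adj hG h1), Or.inr (G.arc_symm _ _ (arc_of_adj hG h2))⟩

lemma arrow_of_headAt {D : MixedGraph V} (hD : D.isDAG) {i j : V} (h : D.headAt i j) :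
    D.arrow i j := by
  rcases h with h | h
  · exact h
  · exact absurd h (hD.2.1 i j)

lemma adj_dag {D : MixedGraph V} (hD : D.isDAG) {i j : V} (h : D.adj i j) :
    D.arrow i j ∨ D.arrow j i := by
  rcases h with h | h | h | h
  · exact absurd h (hD.1 i j)
  · exact Or.inl h
  · exact Or.inr h
  · exact absurd h (hD.2.1 i j)

lemma no_two_cycle {D : MixedGraph V} (hD : D.isDAG) {i j : V} (h1 : D.arrow i j)
    (h2 : D.arrow j i) : False :=
  hD.2.2 i (Relation.TransGen.head h1 (Relation.TransGen.single h2))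

lemma innerOK_pair (G : MixedGraph V) (C : Set V) (a b : V) : G.innerOK C [a, b] := by
  simp [innerOK]

lemma innerOK_cons_cons_cons (G : MixedGraph V) (C : Set V) (a b c : V) (r : List V) :
    G.innerOK C (a :: b :: c :: r) ↔
      ((G.collider a b c → b ∈ C ∨ ∃ x ∈ C, G.anc b x) ∧
        (¬ G.collider a b c → b ∉ C)) ∧ G.innerOK C (b :: c :: r) := by
  rw [innerOK]

lemma not_mSep_of_adj {G : MixedGraph V} {a b : V} (h : G.adj a b) (C : Set V) :
    ¬ G.mSep {a} {b} C := by
  intro hs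
  exact hs ⟨a, b, [a, b], rfl, rfl,
    ⟨by simp [ne_of_adj h], by simp [List.Chain', h]⟩, by simp, rfl, rfl, innerOK_pair G C a b⟩


/-- positional inner nodes all belong to `C` -/
def innerAll (C : Set V) : List V → Prop
  | _ :: b :: c :: rest => b ∈ C ∧ innerAll C (b :: c :: rest)
  | _ => True

lemma innerAll_short (C : Set V) (p : List V) (h : p.length ≤ 2) : innerAll C p := by
  match p with
  | [] => trivial
  | [a] => trivial
  | [a, b] => trivial
  | a :: b :: c :: r => simp at h

lemma innerAll_cons3 (C : Set V) (a b c : V) (r : List V) :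
    innerAll C (a :: b :: c :: r) ↔ b ∈ C ∧ innerAll C (b :: c :: r) := by
  rw [innerAll]

lemma innerOK_iff_innerAll {G : MixedGraph V} (hG : G.isBG) (C : Set V) :
    ∀ p : List V, List.Chain' G.adj p → (G.innerOK C p ↔ innerAll C p) := by
  intro p
  induction p with
  | nil => intro _; simp [innerOK, innerAll]
  | cons a q ih =>
    intro hc
    match q with
    | [] => simp [innerOK, innerAll]
    | [b] => simp [innerOK, innerAll]
    | b :: c :: r =>
      have hab : G.adj a b := (List.isChain_cons_cons.mp hc).1
      have hbc : G.adj b c := (List.isChain_cons_cons.mp (List.isChain_cons_cons.mp hc).2).1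
      have hcol : G.collider a b c := collider_bg hG hab hbc
      rw [innerOK_cons_cons_cons, innerAll_cons3, ih (List.isChain_cons_cons.mp hc).2]
      constructor
      · rintro ⟨⟨h1, _⟩, h2⟩
        refine ⟨?_, h2⟩
        rcases h1 hcol with h | ⟨x, hx, hax⟩
        · exact h
        · rwa [(anc_iff_bg hG).mp hax]
      · rintro ⟨hb, h2⟩
        exact ⟨⟨fun _ => Or.inl hb, fun hn => absurd hcol hn⟩, h2⟩

lemma bg_sep_empty {G : MixedGraph V} (hG : G.isBG) {a b : V} (hne : a ≠ b)
    (hnadj : ¬ G.adj a b) : G.mSep {a} {b} ∅ := by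
  rintro ⟨i, j, p, hi, hj, ⟨hnd, hch⟩, hlen, hhd, hlast, hok⟩
  rw [Set.mem_singleton_iff] at hi hj
  subst hi; subst hj
  have hall := (innerOK_iff_innerAll hG ∅ p hch).mp hok
  match p, hhd, hlast with
  | [x], hhd, hlast =>
    simp at hlen
  | [x, y], hhd, hlast =>
    simp at hhd hlast
    subst hhd
    have : y = j := by simpa using hlast
    subst this
    exact hnadj (List.isChain_cons_cons.mp hch).1
  | x :: y :: z :: r, hhd, hlast =>
    rw [innerAll_cons3] at hall
    exact hall.1

lemma collider_forced {D : MixedGraph V} (hD : D.isDAG) {a b c : V}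
    (hab : D.adj a b) (hbc : D.adj b c) (hac : a ≠ c) (hsep : D.mSep {a} {c} ∅) :
    D.arrow a b ∧ D.arrow c b := by
  by_contra h
  refine hsep ⟨a, c, [a, b, c], rfl, rfl,
    ⟨by simp [ne_of_adj hab, ne_of_adj hbc, hac], by simp [List.Chain', hab, hbc]⟩, by simp, rfl, rfl, ?_⟩
  rw [innerOK_cons_cons_cons]
  refine ⟨⟨fun hcol => absurd ⟨arrow_of_headAt hD hcol.1, arrow_of_headAt hD hcol.2⟩ h,
    fun _ => Set.notMem_empty b⟩, innerOK_pair D ∅ b c⟩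


lemma dag_maximal {D : MixedGraph V} (hD : D.isDAG) : D.isMaximal := by
  classical
  intro a b hne hnadj
  set AS : Set V := {v | D.anc v a ∨ D.anc v b} with hASdef
  have hclose : ∀ u v : V, D.anc u v → v ∈ AS → u ∈ AS := fun u v huv hv =>
    hv.imp huv.trans huv.trans
  refine ⟨AS \ {a, b}, by simp, by simp, ?_⟩
  have claimB : ∀ p : List V, List.Chain' D.adj p → D.innerOK (AS \ {a, b}) p →
      p.getLast? = some b →
      (∀ y z t, p = y :: z :: t → D.arrow y z → y ∈ AS) ∧
      (∀ y, p.head? = some y → ∀ v ∈ p.tail, v ≠ b → v ∈ AS ∨ D.anc v y) := by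
    intro p
    induction p with
    | nil => intro _ _ h; simp at h
    | cons x q ih =>
      intro hch hok hlast
      match q with
      | [] =>
        refine ⟨?_, ?_⟩
        · intro y z t heq; simp at heq
        · intro y _ v hv; simp at hv
      | y :: t =>
        have hxy : D.adj x y := (List.isChain_cons_cons.mp hch).1
        have hchq : List.Chain' D.adj (y :: t) := (List.isChain_cons_cons.mp hch).2
        have hokq : D.innerOK (AS \ {a, b}) (y :: t) := by
          match t with
          | [] => trivial
          | z :: t' => exact ((innerOK_cons_cons_cons D _ x y z t').mp hok).2
        have hlastq : (y :: t).getLast? = some b := by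
          rwa [List.getLast?_cons_cons] at hlast
        obtain ⟨B1q, B2q⟩ := ih hchq hokq hlastq
        have hyfact : ∀ z t', t = z :: t' → (y ∈ AS ∨ D.arrow y x) := by
          intro z t' ht; subst ht
          have hyz : D.adj y z := (List.isChain_cons_cons.mp hchq).1
          have hcond := ((innerOK_cons_cons_cons D _ x y z t').mp hok).1
          by_cases h1 : D.arrow y z
          · exact Or.inl (B1q y z t' rfl h1)
          · have hzy := (adj_dag hD hyz).resolve_left h1
            by_cases h2 : D.arrow x y
            · have hcol : D.collider x y z := ⟨Or.inl h2, Or.inl hzy⟩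
              rcases hcond.1 hcol with h | ⟨w, hw, hyw⟩
              · exact Or.inl h.1
              · exact Or.inl (hclose y w hyw hw.1)
            · exact Or.inr ((adj_dag hD hxy).resolve_left h2)
        constructor
        · intro y' z' t' heq harr
          cases heq
          match t, hlastq with
          | [], hlastq =>
            have hyb : y = b := by simpa using hlastq
            subst hyb
            exact Or.inr (Relation.ReflTransGen.single harr)
          | z :: t', _ =>
            rcases hyfact z t' rfl with h | h
            · exact hclose x y (Relation.ReflTransGen.single harr) h
            · exact (no_two_cycle hD harr h).elim
        · intro y0 hy0 v hv hvb
          have hy0x : x = y0 := by simpa using hy0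
          subst hy0x
          have hv' : v = y ∨ v ∈ t := by simpa using hv
          rcases hv' with rfl | hvt
          · match t, hlastq with
            | [], hlastq =>
              exact absurd (by simpa using hlastq) hvb
            | z :: t', _ =>
              rcases hyfact z t' rfl with h | h
              · exact Or.inl h
              · exact Or.inr (Relation.ReflTransGen.single h)
          · rcases B2q y rfl v (by simpa using hvt) hvb with h | hanc
            · exact Or.inl h
            · by_cases hyb : y = b
              · subst hyb; exact Or.inl (Or.inr hanc)
              · match t, hvt, hlastq with
                | z :: t', hvt, _ =>
                  rcases hyfact z t' rfl with h | h
                  · exact Or.inl (hclose v y hanc h)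
                  · exact Or.inr (hanc.trans (Relation.ReflTransGen.single h))
  rintro ⟨aa, bb, p, hi, hj, ⟨hnd, hch⟩, hlen, hhd, hlast, hok⟩
  rw [Set.mem_singleton_iff] at hi hj
  subst hi; subst hj
  obtain ⟨B1, B2⟩ := claimB p hch hok hlast
  match p, hhd, hlast, hlen with
  | [x], _, _, hlen => simp at hlen
  | x :: y :: t, hhd, hlast, _ =>
    have hx : x = aa := by simpa using hhd
    subst hx
    have hinner : ∀ v ∈ y :: t, v ≠ bb → v ∈ AS \ {x, bb} := by
      intro v hv hvj
      have hvi : v ≠ x := by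
        rintro rfl
        exact (List.nodup_cons.mp hnd).1 hv
      have hvAS : v ∈ AS := by
        rcases B2 x rfl v (by simpa using hv) hvj with h | h
        · exact h
        · exact Or.inl h
      exact ⟨hvAS, by simp [hvi, hvj]⟩
    match t, hlast with
    | [], hlast =>
      have : y = bb := by simpa using hlast
      subst this
      exact hnadj (List.isChain_cons_cons.mp hch).1
    | z :: t', hlast =>
      have hjmem : bb ∈ z :: t' := by
        refine List.mem_of_getLast? (l := z :: t') ?_
        rwa [List.getLast?_cons_cons, List.getLast?_cons_cons] at hlast
      have hynd : y ∉ z :: t' :=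
        (List.nodup_cons.mp (List.nodup_cons.mp hnd).2).1
      have hyj : y ≠ bb := by rintro rfl; exact hynd hjmem
      have hyC : y ∈ AS \ {x, bb} := hinner y (by simp) hyj
      have hcond := ((innerOK_cons_cons_cons D _ x y z t').mp hok).1
      have hcol : D.collider x y z := by
        by_contra hncol
        exact hcond.2 hncol hyC
      have hiy : D.arrow x y := arrow_of_headAt hD hcol.1
      have hzy : D.arrow z y := arrow_of_headAt hD hcol.2
      rcases hyC.1 with hya | hyb
      · exact hD.2.2 x (Relation.TransGen.head' hiy hya)
      · match t', hlast with
        | [], hlast =>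
          have : z = bb := by simpa using hlast
          subst this
          exact hD.2.2 z (Relation.TransGen.head' hzy hyb)
        | w :: t'', hlast =>
          have hjmem' : bb ∈ w :: t'' := by
            refine List.mem_of_getLast? (l := w :: t'') ?_
            simpa using hlast
          have hznd : z ∉ w :: t'' :=
            (List.nodup_cons.mp (List.nodup_cons.mp (List.nodup_cons.mp hnd).2).2).1
          have hzj : z ≠ bb := by rintro rfl; exact hznd hjmem'
          have hzC : z ∈ AS \ {x, bb} := hinner z (by simp) hzj
          have hokq := ((innerOK_cons_cons_cons D _ x y z (w :: t'')).mp hok).2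
          have hcond2 := ((innerOK_cons_cons_cons D _ y z w t'').mp hokq).1
          have hcol2 : D.collider y z w := by
            by_contra hncol
            exact hcond2.2 hncol hzC
          exact no_two_cycle hD (arrow_of_headAt hD hcol2.1) hzy


lemma skel_eq {G D : MixedGraph V} (hG : G.isBG) (hD : D.isDAG) (heq : G.markovEquiv D) :
    ∀ i j, G.adj i j ↔ D.adj i j := by
  intro i j
  constructor
  · intro h
    by_contra hn
    obtain ⟨C, hiC, hjC, hsep⟩ := dag_maximal hD i j (ne_of_adj h) hn
    exact not_mSep_of_adj h C
      ((heq {i} {j} C (by simp [ne_of_adj h]) (Set.disjoint_singleton_left.mpr hiC)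
        (Set.disjoint_singleton_left.mpr hjC)).mpr hsep)
  · intro h
    by_contra hn
    exact not_mSep_of_adj h ∅
      ((heq {i} {j} ∅ (by simp [ne_of_adj h]) (by simp) (by simp)).mp
        (bg_sep_empty hG (ne_of_adj h) hn))

lemma uc_transfer {G D : MixedGraph V} (hG : G.isBG) (hD : D.isDAG) (heq : G.markovEquiv D)
    {x y z : V} (hxy : G.adj x y) (hyz : G.adj y z) (hxz : x ≠ z) (hnadj : ¬ G.adj x z) :
    D.arrow x y ∧ D.arrow z y := by
  have hsepD := (heq {x} {z} ∅ (by simp [hxz]) (by simp) (by simp)).mp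
    (bg_sep_empty hG hxz hnadj)
  exact collider_forced hD ((skel_eq hG hD heq x y).mp hxy) ((skel_eq hG hD heq y z).mp hyz)
    hxz hsepD


lemma forward_dir {V : Type*} {G D : MixedGraph V} (hG : G.isBG) (hD : D.isDAG)
    (heq : G.markovEquiv D) : ¬ inducedP4 G.adj ∧ ¬ inducedC4 G.adj := by
  constructor
  · rintro ⟨a, b, c, d, hab, hac, had, hbc, hbd, hcd, eab, ebc, ecd, nac, nad, nbd⟩
    obtain ⟨-, h1⟩ := uc_transfer hG hD heq eab ebc hac nac
    obtain ⟨h2, -⟩ := uc_transfer hG hD heq ebc ecd hbd nbd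
    exact no_two_cycle hD h1 h2
  · rintro ⟨a, b, c, d, hab, hac, had, hbc, hbd, hcd, eab, ebc, ecd, eda, nac, nbd⟩
    obtain ⟨-, h1⟩ := uc_transfer hG hD heq eab ebc hac nac
    obtain ⟨h2, -⟩ := uc_transfer hG hD heq ebc ecd hbd nbd
    exact no_two_cycle hD h1 h2


/-! ### Construction of the DAG -/

def Nsub (G : MixedGraph V) (i j : V) : Prop := ∀ x, G.adj x i → G.adj x j ∨ x = j

lemma Nsub_refl (G : MixedGraph V) (i : V) : Nsub G i i := fun _ hx => Or.inl hx

lemma Nsub_trans {G : MixedGraph V} (hG : G.isBG) {i j k : V} (h1 : Nsub G i j)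
    (h2 : Nsub G j k) : Nsub G i k := by
  intro x hx
  rcases h1 x hx with h | rfl
  · exact h2 x h
  · rcases h2 i (adj_symm_bg hG hx) with hik | rfl
    · rcases h1 k (adj_symm_bg hG hik) with hkj | rfl
      · exact Or.inl (adj_symm_bg hG hkj)
      · exact Or.inr rfl
    · exact Or.inl hx

def prec (G : MixedGraph V) (f : V → ℕ) (i j : V) : Prop :=
  Nsub G i j ∧ (¬ Nsub G j i ∨ f i < f j)

lemma prec_irrefl (G : MixedGraph V) (f : V → ℕ) (i : V) : ¬ prec G f i i := by
  rintro ⟨-, h | h⟩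
  · exact h (Nsub_refl G i)
  · exact lt_irrefl _ h

lemma prec_trans {G : MixedGraph V} (hG : G.isBG) (f : V → ℕ) {i j k : V}
    (h1 : prec G f i j) (h2 : prec G f j k) : prec G f i k := by
  refine ⟨Nsub_trans hG h1.1 h2.1, ?_⟩
  by_cases hki : Nsub G k i
  · have ha : f i < f j := h1.2.resolve_left fun hn => hn (Nsub_trans hG h2.1 hki)
    have hb : f j < f k := h2.2.resolve_left fun hn => hn (Nsub_trans hG hki h1.1)
    exact Or.inr (lt_trans ha hb)
  · exact Or.inl hki

lemma comparable {G : MixedGraph V} (hG : G.isBG) (hP4 : ¬ inducedP4 G.adj)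
    (hC4 : ¬ inducedC4 G.adj) {i j : V} (hij : G.adj i j) : Nsub G i j ∨ Nsub G j i := by
  by_contra h
  push_neg at h
  obtain ⟨h1, h2⟩ := h
  simp only [Nsub, not_forall] at h1 h2
  obtain ⟨x, hxi, hx⟩ := h1
  obtain ⟨y, hyj, hy⟩ := h2
  push_neg at hx hy
  obtain ⟨hxj, hxj'⟩ := hx
  obtain ⟨hyi, hyi'⟩ := hy
  have hxy' : x ≠ y := fun hxy => hyi (hxy ▸ hxi)
  have hxi' : x ≠ i := ne_of_adj hxi
  have hij' : i ≠ j := ne_of_adj hij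
  have hyj' : y ≠ j := ne_of_adj hyj
  have hiy' : i ≠ y := Ne.symm hyi'
  have hiy2 : ¬ G.adj i y := fun hiy => hyi (adj_symm_bg hG hiy)
  by_cases hxy : G.adj x y
  · exact hC4 ⟨x, i, j, y, hxi', hxj', hxy', hij', hiy', Ne.symm hyj',
      hxi, hij, adj_symm_bg hG hyj, adj_symm_bg hG hxy, hxj, hiy2⟩
  · exact hP4 ⟨x, i, j, y, hxi', hxj', hxy', hij', hiy', Ne.symm hyj',
      hxi, hij, adj_symm_bg hG hyj, hxj, hxy, hiy2⟩

def toDAG (G : MixedGraph V) (f : V → ℕ) : MixedGraph V where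
  line _ _ := False
  arrow i j := G.adj i j ∧ prec G f i j
  arc _ _ := False
  line_symm := fun _ _ h => h.elim
  arc_symm := fun _ _ h => h.elim
  line_irrefl := fun _ h => h
  arrow_irrefl := fun i h => adj_irrefl G i h.1
  arc_irrefl := fun _ h => h

lemma toDAG_arrow_total {G : MixedGraph V} (hG : G.isBG) (hP4 : ¬ inducedP4 G.adj)
    (hC4 : ¬ inducedC4 G.adj) {f : V → ℕ} (hf : Function.Injective f) {i j : V}
    (hij : G.adj i j) : (toDAG G f).arrow i j ∨ (toDAG G f).arrow j i := by
  have hne : f i ≠ f j := fun h => ne_of_adj hij (hf h)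
  rcases comparable hG hP4 hC4 hij with hn | hn
  · by_cases hn' : Nsub G j i
    · rcases lt_or_gt_of_ne hne with h | h
      · exact Or.inl ⟨hij, hn, Or.inr h⟩
      · exact Or.inr ⟨adj_symm_bg hG hij, hn', Or.inr h⟩
    · exact Or.inl ⟨hij, hn, Or.inl hn'⟩
  · by_cases hn' : Nsub G i j
    · rcases lt_or_gt_of_ne hne with h | h
      · exact Or.inl ⟨hij, hn', Or.inr h⟩
      · exact Or.inr ⟨adj_symm_bg hG hij, hn, Or.inr h⟩
    · exact Or.inr ⟨adj_symm_bg hG hij, hn, Or.inl hn'⟩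

lemma toDAG_adj {G : MixedGraph V} (hG : G.isBG) (hP4 : ¬ inducedP4 G.adj)
    (hC4 : ¬ inducedC4 G.adj) {f : V → ℕ} (hf : Function.Injective f) (i j : V) :
    (toDAG G f).adj i j ↔ G.adj i j := by
  constructor
  · rintro (h | h | h | h)
    · exact h.elim
    · exact h.1
    · exact adj_symm_bg hG h.1
    · exact h.elim
  · intro h
    rcases toDAG_arrow_total hG hP4 hC4 hf h with h' | h'
    · exact Or.inr (Or.inl h')
    · exact Or.inr (Or.inr (Or.inl h'))

lemma toDAG_isDAG {G : MixedGraph V} (hG : G.isBG) (f : V → ℕ) : (toDAG G f).isDAG := by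
  refine ⟨fun _ _ h => h, fun _ _ h => h, fun i hi => ?_⟩
  have : ∀ j, Relation.TransGen (toDAG G f).arrow i j → prec G f i j := by
    intro j h
    induction h with
    | single h => exact h.2
    | tail _ h ih => exact prec_trans hG f ih h.2
  exact prec_irrefl G f i (this i hi)

lemma toDAG_arrow_trans {G : MixedGraph V} (hG : G.isBG) (f : V → ℕ) {i j k : V}
    (h1 : (toDAG G f).arrow i j) (h2 : (toDAG G f).arrow j k) : (toDAG G f).arrow i k := by
  have hp : prec G f i k := prec_trans hG f h1.2 h2.2
  have hik : i ≠ k := fun h => prec_irrefl G f i (h ▸ hp)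
  rcases h2.2.1 i h1.1 with h | h
  · exact ⟨h, hp⟩
  · exact absurd h hik


/-! ### Extracting a nodup path from a walk through `C` -/

lemma walk_to_path {G : MixedGraph V} {C : Set V} {b : V} :
    ∀ (n : ℕ) (l : List V) (a : V), l.length ≤ n → a ≠ b →
      List.Chain G.adj a (l ++ [b]) → (∀ v ∈ l, v ∈ C) →
      ∃ p : List V, p.Nodup ∧ List.Chain' G.adj p ∧ p.head? = some a ∧
        p.getLast? = some b ∧ 2 ≤ p.length ∧ innerAll C p ∧
        ∀ v ∈ p, v = a ∨ v ∈ l ∨ v = b := by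
  intro n
  induction n with
  | zero =>
    intro l a hlen hab hch _
    have hl : l = [] := List.length_eq_zero_iff.mp (Nat.le_zero.mp hlen)
    subst hl
    rw [List.nil_append, List.Chain, List.isChain_pair] at hch
    exact ⟨[a, b], by simp [hab], by simp [List.Chain', hch], rfl, rfl, by simp, trivial,
      by intro v hv; simp at hv; tauto⟩
  | succ n ih =>
    intro l a hlen hab hch hmem
    by_cases hbl : b ∈ l
    · obtain ⟨l₁, l₂, rfl⟩ := List.append_of_mem hbl
      rw [List.append_assoc, List.cons_append, List.Chain, List.isChain_cons_split] at hch
      obtain ⟨p, h1, h2, h3, h4, h5, h6, h7⟩ := ih l₁ a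
        (by simp at hlen ⊢; omega) hab hch.1
        (fun v hv => hmem v (by simp [hv]))
      exact ⟨p, h1, h2, h3, h4, h5, h6, fun v hv => by
        rcases h7 v hv with h | h | h
        · exact Or.inl h
        · exact Or.inr (Or.inl (by simp [h]))
        · exact Or.inr (Or.inr h)⟩
    · by_cases hal : a ∈ l
      · obtain ⟨l₁, l₂, rfl⟩ := List.append_of_mem hal
        rw [List.append_assoc, List.cons_append, List.Chain, List.isChain_cons_split] at hch
        obtain ⟨p, h1, h2, h3, h4, h5, h6, h7⟩ := ih l₂ a
          (by simp at hlen ⊢; omega) hab hch.2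
          (fun v hv => hmem v (by simp [hv]))
        exact ⟨p, h1, h2, h3, h4, h5, h6, fun v hv => by
          rcases h7 v hv with h | h | h
          · exact Or.inl h
          · exact Or.inr (Or.inl (by simp [h]))
          · exact Or.inr (Or.inr h)⟩
      · match l, hch, hmem, hlen with
        | [], hch, _, _ =>
          rw [List.nil_append, List.Chain, List.isChain_pair] at hch
          exact ⟨[a, b], by simp [hab], by simp [List.Chain', hch], rfl, rfl, by simp, trivial,
            by intro v hv; simp at hv; tauto⟩
        | c :: l', hch, hmem, hlen =>
          rw [List.cons_append, List.Chain, List.isChain_cons_cons] at hch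
          obtain ⟨hac, hch'⟩ := hch
          have hcb : c ≠ b := fun h => hbl (by simp [h])
          obtain ⟨p, h1, h2, h3, h4, h5, h6, h7⟩ := ih l' c
            (by simp at hlen ⊢; omega) hcb hch'
            (fun v hv => hmem v (by simp [hv]))
          have hap : a ∉ p := by
            intro hv
            rcases h7 a hv with h | h | h
            · exact ne_of_adj hac h
            · exact hal (by simp [h])
            · exact hab h
          match p, h3, h4 with
          | c' :: rest, h3, h4 =>
            have hc' : c' = c := by simpa using h3
            have hac' : G.adj a c' := by rw [hc']; exact hac
            refine ⟨a :: c' :: rest, List.nodup_cons.mpr ⟨hap, h1⟩,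
              List.isChain_cons.mpr ⟨by simp [hac'], h2⟩, rfl, ?_, by simp, ?_, ?_⟩
            · rw [List.getLast?_cons_cons]; exact h4
            · match rest with
              | [] => trivial
              | d :: rest' =>
                rw [innerAll_cons3]
                exact ⟨hmem c' (by simp [hc']), h6⟩
            · intro v hv
              rcases List.mem_cons.mp hv with rfl | hv
              · exact Or.inl rfl
              · rcases h7 v hv with h | h | h
                · exact Or.inr (Or.inl (by simp [h]))
                · exact Or.inr (Or.inl (by simp [h]))
                · exact Or.inr (Or.inr h)


lemma toDAG_collider_iff {G : MixedGraph V} {f : V → ℕ} {x y z : V} :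
    (toDAG G f).collider x y z ↔ (toDAG G f).arrow x y ∧ (toDAG G f).arrow z y := by
  simp only [collider, headAt]
  constructor
  · rintro ⟨h1 | h1, h2 | h2⟩ <;> first | exact ⟨h1, h2⟩ | exact h1.elim | exact h2.elim
  · rintro ⟨h1, h2⟩; exact ⟨Or.inl h1, Or.inl h2⟩

lemma toDAG_anc_arrow {G : MixedGraph V} (hG : G.isBG) (f : V → ℕ) {y c : V}
    (h : (toDAG G f).anc y c) : y = c ∨ (toDAG G f).arrow y c := by
  induction h with
  | refl => exact Or.inl rfl
  | tail _ harr ih =>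
    rcases ih with rfl | ih
    · exact Or.inr harr
    · exact Or.inr (toDAG_arrow_trans hG f ih harr)

lemma conn_to_walk {G : MixedGraph V} (hG : G.isBG) (hP4 : ¬ inducedP4 G.adj)
    (hC4 : ¬ inducedC4 G.adj) {f : V → ℕ} (hf : Function.Injective f) {C : Set V} {b : V} :
    ∀ (n : ℕ) (p : List V) (a : V), p.length ≤ n → p.Nodup → List.Chain' G.adj p →
      (toDAG G f).innerOK C p → p.head? = some a → p.getLast? = some b → 2 ≤ p.length →
      ∃ l : List V, List.Chain G.adj a (l ++ [b]) ∧ ∀ v ∈ l, v ∈ C := by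
  intro n
  induction n with
  | zero =>
    intro p a hlen _ _ _ _ _ hlen2
    omega
  | succ n ih =>
    intro p a hlen hnd hch hok hhd hlast hlen2
    match p, hhd, hlast, hlen2 with
    | [x, y], hhd, hlast, _ =>
      have hx : x = a := by simpa using hhd
      subst hx
      have hy : y = b := by simpa using hlast
      subst hy
      exact ⟨[], by simpa [List.Chain] using (List.isChain_cons_cons.mp hch).1,
        by simp⟩
    | x :: y :: z :: t, hhd, hlast, _ =>
      have hx : x = a := by simpa using hhd
      subst hx
      have hxy : G.adj x y := (List.isChain_cons_cons.mp hch).1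
      have hchq : List.Chain' G.adj (y :: z :: t) := (List.isChain_cons_cons.mp hch).2
      have hyz : G.adj y z := (List.isChain_cons_cons.mp hchq).1
      have hcond := ((innerOK_cons_cons_cons (toDAG G f) C x y z t).mp hok).1
      have hokq := ((innerOK_cons_cons_cons (toDAG G f) C x y z t).mp hok).2
      have hlast' : (y :: z :: t).getLast? = some b := by
        rwa [List.getLast?_cons_cons] at hlast
      have hxny : x ∉ y :: z :: t := (List.nodup_cons.mp hnd).1
      have hxb : x ≠ b := by
        intro h
        exact hxny (h ▸ List.mem_of_getLast? hlast')
      have hndq : (y :: z :: t).Nodup := (List.nodup_cons.mp hnd).2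
      have IHq := ih (y :: z :: t) y (by simp at hlen ⊢; omega) hndq hchq hokq rfl
        hlast' (by simp)
      by_cases h1 : (toDAG G f).arrow y x
      · obtain ⟨l, hcl, hl⟩ := IHq
        match l, hcl, hl with
        | [], hcl, hl =>
          rw [List.nil_append, List.Chain, List.isChain_pair] at hcl
          rcases h1.2.1 b (adj_symm_bg hG hcl) with h | h
          · exact ⟨[], by simpa [List.Chain] using adj_symm_bg hG h, by simp⟩
          · exact absurd h.symm hxb
        | w :: l', hcl, hl =>
          rw [List.cons_append, List.Chain, List.isChain_cons_cons] at hcl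
          obtain ⟨hyw, hcl'⟩ := hcl
          rcases h1.2.1 w (adj_symm_bg hG hyw) with h | h
          · refine ⟨w :: l', ?_, hl⟩
            rw [List.cons_append, List.Chain, List.isChain_cons_cons]
            exact ⟨adj_symm_bg hG h, hcl'⟩
          · exact ⟨l', h ▸ hcl', fun v hv => hl v (by simp [hv])⟩
      · have hxyD : (toDAG G f).arrow x y :=
          (toDAG_arrow_total hG hP4 hC4 hf hxy).resolve_right h1
        by_cases hzy : (toDAG G f).arrow z y
        · -- collider at y
          have hcol : (toDAG G f).collider x y z := toDAG_collider_iff.mpr ⟨hxyD, hzy⟩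
          have hyAS := hcond.1 hcol
          obtain ⟨l, hcl, hl⟩ := IHq
          have useY : y ∈ C → ∃ l : List V, List.Chain G.adj x (l ++ [b]) ∧ ∀ v ∈ l, v ∈ C :=
            fun hyC => ⟨y :: l, by rw [List.cons_append, List.Chain, List.isChain_cons_cons]; exact ⟨hxy, hcl⟩,
              fun v hv => by
                rcases List.mem_cons.mp hv with rfl | hv
                exacts [hyC, hl v hv]⟩
          rcases hyAS with hyC | ⟨c, hcC, hanc⟩
          · exact useY hyC
          · by_cases hyc : y = c
            · exact useY (hyc ▸ hcC)
            · have hycD : (toDAG G f).arrow y c :=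
                (toDAG_anc_arrow hG f hanc).resolve_left hyc
              have hNyc : Nsub G y c := hycD.2.1
              have hxc : x ≠ c := by
                intro h
                exact h1 (by rw [h]; exact hycD)
              have hadjxc : G.adj x c := (hNyc x hxy).resolve_right hxc
              match l, hcl, hl with
              | [], hcl, hl =>
                rw [List.nil_append, List.Chain, List.isChain_pair] at hcl
                rcases hNyc b (adj_symm_bg hG hcl) with h | h
                · refine ⟨[c], ?_, by simpa using hcC⟩
                  rw [List.cons_append, List.nil_append, List.Chain, List.isChain_cons_cons, List.isChain_pair]
                  exact ⟨hadjxc, adj_symm_bg hG h⟩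
                · exact ⟨[], by simpa [List.Chain] using h ▸ hadjxc, by simp⟩
              | w :: l', hcl, hl =>
                rw [List.cons_append, List.Chain, List.isChain_cons_cons] at hcl
                obtain ⟨hyw, hcl'⟩ := hcl
                rcases hNyc w (adj_symm_bg hG hyw) with h | h
                · refine ⟨c :: w :: l', ?_, ?_⟩
                  · rw [List.cons_append, List.Chain, List.isChain_cons_cons, List.cons_append,
                      List.isChain_cons_cons]
                    exact ⟨hadjxc, adj_symm_bg hG h, hcl'⟩
                  · intro v hv
                    rcases List.mem_cons.mp hv with rfl | hv
                    · exact hcC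
                    · exact hl v hv
                · refine ⟨w :: l', ?_, hl⟩
                  rw [List.cons_append, List.Chain, List.isChain_cons_cons]
                  exact ⟨by rw [h]; exact hadjxc, hcl'⟩
        · -- noncollider pointing right
          have hyzD : (toDAG G f).arrow y z :=
            (toDAG_arrow_total hG hP4 hC4 hf hyz).resolve_right hzy
          have hxzD := toDAG_arrow_trans hG f hxyD hyzD
          refine ih (x :: z :: t) x (by simp at hlen ⊢; omega) ?_ ?_ ?_ rfl ?_ (by simp)
          · exact List.nodup_cons.mpr ⟨fun hv => hxny (by simp [hv]),
              (List.nodup_cons.mp hndq).2⟩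
          · exact List.isChain_cons_cons.mpr ⟨hxzD.1, (List.isChain_cons_cons.mp hchq).2⟩
          · match t with
            | [] => exact innerOK_pair (toDAG G f) C x z
            | w :: t' =>
              have horig := ((innerOK_cons_cons_cons (toDAG G f) C y z w t').mp hokq)
              rw [innerOK_cons_cons_cons]
              refine ⟨⟨fun hc => horig.1.1 (toDAG_collider_iff.mpr
                ⟨hyzD, (toDAG_collider_iff.mp hc).2⟩), fun hnc => horig.1.2
                (fun hc' => hnc (toDAG_collider_iff.mpr
                  ⟨hxzD, (toDAG_collider_iff.mp hc').2⟩))⟩, horig.2⟩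
          · rw [List.getLast?_cons_cons]
            rwa [List.getLast?_cons_cons] at hlast'


lemma path_to_dconn {G : MixedGraph V} (hG : G.isBG) (hP4 : ¬ inducedP4 G.adj)
    (hC4 : ¬ inducedC4 G.adj) {f : V → ℕ} (hf : Function.Injective f) {C : Set V} {b : V} :
    ∀ (n : ℕ) (p : List V) (a : V), p.length ≤ n → p.Nodup → List.Chain' G.adj p →
      innerAll C p → p.head? = some a → p.getLast? = some b → 2 ≤ p.length →
      ∃ q : List V, q.Nodup ∧ List.Chain' G.adj q ∧ (toDAG G f).innerOK C q ∧
        innerAll C q ∧ q.head? = some a ∧ q.getLast? = some b ∧ 2 ≤ q.length ∧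
        q.length ≤ p.length ∧ ∀ v ∈ q, v ∈ p := by
  intro n
  induction n with
  | zero =>
    intro p a hlen _ _ _ _ _ hlen2
    omega
  | succ n ih =>
    intro p a hlen hnd hch hall hhd hlast hlen2
    match p, hhd, hlast, hlen2 with
    | [x, y], hhd, hlast, _ =>
      have hx : x = a := by simpa using hhd
      subst hx
      exact ⟨[x, y], hnd, hch, innerOK_pair _ _ _ _, trivial, rfl, hlast, by simp,
        by simp, fun v hv => hv⟩
    | x :: y :: z :: t, hhd, hlast, _ =>
      have hx : x = a := by simpa using hhd
      subst hx
      have hxy : G.adj x y := (List.isChain_cons_cons.mp hch).1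
      have hchq : List.Chain' G.adj (y :: z :: t) := (List.isChain_cons_cons.mp hch).2
      have hyz : G.adj y z := (List.isChain_cons_cons.mp hchq).1
      have hlast' : (y :: z :: t).getLast? = some b := by
        rwa [List.getLast?_cons_cons] at hlast
      have hxny : x ∉ y :: z :: t := (List.nodup_cons.mp hnd).1
      have hndq : (y :: z :: t).Nodup := (List.nodup_cons.mp hnd).2
      obtain ⟨hyC, hallq⟩ := (innerAll_cons3 C x y z t).mp hall
      by_cases hcol : (toDAG G f).arrow x y ∧ (toDAG G f).arrow z y
      · -- collider at y : keep y, analyse the recursive path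
        obtain ⟨q, hq1, hq2, hq3, hq4, hq5, hq6, hq7, hq8, hq9⟩ :=
          ih (y :: z :: t) y (by simp at hlen ⊢; omega) hndq hchq hallq rfl hlast' (by simp)
        match q, hq5, hq7 with
        | y' :: w :: t'', hq5, _ =>
          have hy' : y' = y := by simpa using hq5
          subst hy'
          have hyw : G.adj y' w := (List.isChain_cons_cons.mp hq2).1
          have hwp : w ∈ y' :: z :: t := hq9 w (by simp)
          by_cases hw : (toDAG G f).arrow w y'
          · refine ⟨x :: y' :: w :: t'', ?_, List.isChain_cons_cons.mpr ⟨hxy, hq2⟩, ?_, ?_,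
              rfl, ?_, by simp, ?_, ?_⟩
            · exact List.nodup_cons.mpr ⟨fun hv => hxny (hq9 x hv), hq1⟩
            · rw [innerOK_cons_cons_cons]
              exact ⟨⟨fun _ => Or.inl hyC, fun hnc =>
                absurd (toDAG_collider_iff.mpr ⟨hcol.1, hw⟩) hnc⟩, hq3⟩
            · exact (innerAll_cons3 C x y' w t'').mpr ⟨hyC, hq4⟩
            · rw [List.getLast?_cons_cons]; exact hq6
            · simp at hq8 ⊢; omega
            · intro v hv
              rcases List.mem_cons.mp hv with rfl | hv
              · exact List.mem_cons_self
              · exact List.mem_cons_of_mem _ (hq9 v hv)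
          · have hywD : (toDAG G f).arrow y' w :=
              (toDAG_arrow_total hG hP4 hC4 hf hyw).resolve_right hw
            have hxw : x ≠ w := fun h => hxny (h ▸ hwp)
            have hadjxw : G.adj x w := (hywD.2.1 x hxy).resolve_right hxw
            have hsub : ∀ v ∈ w :: t'', v ∈ y' :: z :: t := fun v hv =>
              hq9 v (List.mem_cons_of_mem _ hv)
            obtain ⟨q2, g1, g2, g3, g4, g5, g6, g7, g8, g9⟩ :=
              ih (x :: w :: t'') x
                (by have := hq8; simp at this hlen ⊢; omega)
                (List.nodup_cons.mpr ⟨fun hv => hxny (hsub _ hv),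
                  (List.nodup_cons.mp hq1).2⟩)
                (List.isChain_cons_cons.mpr ⟨hadjxw, (List.isChain_cons_cons.mp hq2).2⟩)
                (by match t'' with
                    | [] => trivial
                    | u :: t''' =>
                      obtain ⟨hwC, htail⟩ := (innerAll_cons3 C y' w u t''').mp hq4
                      exact (innerAll_cons3 C x w u t''').mpr ⟨hwC, htail⟩)
                rfl
                (by rw [List.getLast?_cons_cons]
                    rwa [List.getLast?_cons_cons] at hq6) (by simp)
            refine ⟨q2, g1, g2, g3, g4, g5, g6, g7, ?_, ?_⟩
            · have := hq8; simp at g8 this ⊢; omega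
            · intro v hv
              rcases List.mem_cons.mp (g9 v hv) with rfl | hv'
              · exact List.mem_cons_self
              · exact List.mem_cons_of_mem _ (hsub _ hv')
      · -- no collider at y : shortcut y
        have hside : (toDAG G f).arrow y x ∨ (toDAG G f).arrow y z := by
          rcases toDAG_arrow_total hG hP4 hC4 hf hxy with h | h
          · have hzy : ¬ (toDAG G f).arrow z y := fun hz => hcol ⟨h, hz⟩
            exact Or.inr ((toDAG_arrow_total hG hP4 hC4 hf hyz).resolve_right hzy)
          · exact Or.inl h
        have hxz : x ≠ z := fun h => hxny (h ▸ by simp)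
        have hadjxz : G.adj x z := by
          rcases hside with h | h
          · have := (h.2.1 z (adj_symm_bg hG hyz)).resolve_right fun heq => hxz heq.symm
            exact adj_symm_bg hG this
          · exact (h.2.1 x hxy).resolve_right hxz
        obtain ⟨q, hq1, hq2, hq3, hq4, hq5, hq6, hq7, hq8, hq9⟩ :=
          ih (x :: z :: t) x (by simp at hlen ⊢; omega)
            (List.nodup_cons.mpr ⟨fun hv => hxny (List.mem_cons_of_mem _ hv),
              (List.nodup_cons.mp hndq).2⟩)
            (List.isChain_cons_cons.mpr ⟨hadjxz, (List.isChain_cons_cons.mp hchq).2⟩)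
            (by match t with
                | [] => trivial
                | w :: t' =>
                  obtain ⟨hzC, htail⟩ := (innerAll_cons3 C y z w t').mp hallq
                  exact (innerAll_cons3 C x z w t').mpr ⟨hzC, htail⟩)
            rfl
            (by rw [List.getLast?_cons_cons]
                rwa [List.getLast?_cons_cons] at hlast') (by simp)
        refine ⟨q, hq1, hq2, hq3, hq4, hq5, hq6, hq7, ?_, ?_⟩
        · simp at hq8 ⊢; omega
        · intro v hv
          rcases List.mem_cons.mp (hq9 v hv) with rfl | hv'
          · exact List.mem_cons_self
          · exact List.mem_cons_of_mem _ (List.mem_cons_of_mem _ hv')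


lemma reverse_dir {G : MixedGraph V} [Fintype V] (hG : G.isBG) (hP4 : ¬ inducedP4 G.adj)
    (hC4 : ¬ inducedC4 G.adj) : ∃ D : MixedGraph V, D.isDAG ∧ G.markovEquiv D := by
  classical
  let f : V → ℕ := fun v => (Fintype.equivFin V v : ℕ)
  have hf : Function.Injective f := fun u v h =>
    (Fintype.equivFin V).injective (Fin.val_injective h)
  refine ⟨toDAG G f, toDAG_isDAG hG f, ?_⟩
  intro A B C hAB _ _
  have key : ∀ i j : V, i ≠ j →
      ((∃ p, G.mConnecting C i j p) ↔ (∃ p, (toDAG G f).mConnecting C i j p)) := by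
    intro i j hij
    constructor
    · rintro ⟨p, ⟨hnd, hch⟩, hlen, hhd, hlast, hok⟩
      have hall := (innerOK_iff_innerAll hG C p hch).mp hok
      obtain ⟨q, g1, g2, g3, g4, g5, g6, g7, g8, g9⟩ :=
        path_to_dconn hG hP4 hC4 hf p.length p i le_rfl hnd hch hall hhd hlast hlen
      exact ⟨q, ⟨g1, g2.imp fun {u v} h => (toDAG_adj hG hP4 hC4 hf u v).mpr h⟩, g7, g5, g6, g3⟩
    · rintro ⟨p, ⟨hnd, hch⟩, hlen, hhd, hlast, hok⟩
      have hchG : List.Chain' G.adj p := hch.imp fun {u v} h => (toDAG_adj hG hP4 hC4 hf u v).mp h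
      obtain ⟨l, hcl, hl⟩ :=
        conn_to_walk hG hP4 hC4 hf p.length p i le_rfl hnd hchG hok hhd hlast hlen
      obtain ⟨q, g1, g2, g3, g4, g5, g6, g7⟩ := walk_to_path l.length l i le_rfl hij hcl hl
      exact ⟨q, ⟨g1, g2⟩, g5, g3, g4, (innerOK_iff_innerAll hG C q g2).mpr g6⟩
  constructor
  · intro hs
    rintro ⟨i, j, q, hi, hj, hc⟩
    have hij : i ≠ j := fun h => (Set.disjoint_left.mp hAB hi) (h ▸ hj)
    obtain ⟨p, hp⟩ := (key i j hij).mpr ⟨q, hc⟩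
    exact hs ⟨i, j, p, hi, hj, hp⟩
  · intro hs
    rintro ⟨i, j, q, hi, hj, hc⟩
    have hij : i ≠ j := fun h => (Set.disjoint_left.mp hAB hi) (h ▸ hj)
    obtain ⟨p, hp⟩ := (key i j hij).mp ⟨q, hc⟩
    exact hs ⟨i, j, p, hi, hj, hp⟩

end MixedGraph

/-- A bidirected graph is Markov equivalent to some DAG iff it contains no
induced `P₄` and no induced `C₄`. -/
theorem bg_equiv_some_dag_iff {V : Type*} [Fintype V] (G : MixedGraph V)
    (hG : G.isBG) :
    (∃ D : MixedGraph V, D.isDAG ∧ G.markovEquiv D) ↔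
      (¬ inducedP4 G.adj ∧ ¬ inducedC4 G.adj) := by
  constructor
  · rintro ⟨D, hD, heq⟩
    exact MixedGraph.forward_dir hG hD heq
  · rintro ⟨hP4, hC4⟩
    exact MixedGraph.reverse_dir hG hP4 hC4
end
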